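/- For H = (px²+py²+pz²)/2 + k1(x²+y²+4z²) + k2/x² + k3/y² + k4/z², with K_RL1 = −px·(z·px−x·pz) + 2k1x²z − 2k2 z/x², one has {K_RL1, H} = (2k4/z²)·(x·px/z) and {x·px/z, H} = −(1/z²)·K_RL1. -/

import Mathlib

noncomputable section

/-- Phase space ℝ⁶ with coordinates (x,y,z,px,py,pz). -/
abbrev Pt := Fin 6 → ℝ

/-- Standard basis vector. -/
def e (j : Fin 6) : Pt := Pi.single j 1

/-- Canonical Poisson bracket on ℝ⁶:
{F,G} = Σᵢ (∂F/∂qᵢ ∂G/∂pᵢ − ∂F/∂pᵢ ∂G/∂qᵢ). -/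
def pb (F G : Pt → ℝ) (q : Pt) : ℝ :=
    (fderiv ℝ F q (e 0)) * (fderiv ℝ G q (e 3)) - (fderiv ℝ F q (e 3)) * (fderiv ℝ G q (e 0))
  + (fderiv ℝ F q (e 1)) * (fderiv ℝ G q (e 4)) - (fderiv ℝ F q (e 4)) * (fderiv ℝ G q (e 1))
  + (fderiv ℝ F q (e 2)) * (fderiv ℝ G q (e 5)) - (fderiv ℝ F q (e 5)) * (fderiv ℝ G q (e 2))

/-- H = (px²+py²+pz²)/2 + k1(x²+y²+4z²) + k2/x² + k3/y² + k4/z². -/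
def Ham (k1 k2 k3 k4 : ℝ) (q : Pt) : ℝ :=
  (q 3 ^ 2 + q 4 ^ 2 + q 5 ^ 2) / 2 + k1 * (q 0 ^ 2 + q 1 ^ 2 + 4 * q 2 ^ 2)
    + k2 / q 0 ^ 2 + k3 / q 1 ^ 2 + k4 / q 2 ^ 2

/-- K_RL1 = −px·(z px − x pz) + 2k1 x² z − 2k2 z/x². -/
def KRL1 (k1 k2 : ℝ) (q : Pt) : ℝ :=
  -(q 3 * (q 2 * q 3 - q 0 * q 5)) + 2 * k1 * q 0 ^ 2 * q 2 - 2 * k2 * q 2 / q 0 ^ 2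

theorem myDiv {c d : Pt → ℝ} {c' d' : Pt →L[ℝ] ℝ} {x : Pt}
    (hc : HasFDerivAt c c' x) (hd : HasFDerivAt d d' x) (hx : d x ≠ 0) :
    HasFDerivAt (fun y => c y / d y)
      (c x • ((-((d x) ^ 2)⁻¹) • d') + (d x)⁻¹ • c') x := by
  have h1 : HasFDerivAt (fun y => (d y)⁻¹) ((-((d x) ^ 2)⁻¹) • d') x := by
    have h := (hasDerivAt_inv hx).comp_hasFDerivAt x hd
    exact h
  have h2 := hc.mul h1
  simp only [div_eq_mul_inv]
  exact h2


set_option maxHeartbeats 2000000 in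
theorem stmt8 (k1 k2 k3 k4 : ℝ) :
    ∀ q : Pt, q 0 ≠ 0 → q 1 ≠ 0 → q 2 ≠ 0 →
      pb (KRL1 k1 k2) (Ham k1 k2 k3 k4) q = (2 * k4 / q 2 ^ 2) * (q 0 * q 3 / q 2) ∧
      pb (fun p => p 0 * p 3 / p 2) (Ham k1 k2 k3 k4) q = -(1 / q 2 ^ 2) * KRL1 k1 k2 q := by
  intro q h0 h1 h2
  have P : ∀ i : Fin 6, HasFDerivAt (fun p : Pt => p i)
      (ContinuousLinearMap.proj i : Pt →L[ℝ] ℝ) q :=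
    fun i => by exact hasFDerivAt_apply i q
  have Q : ∀ i : Fin 6, HasFDerivAt (fun p : Pt => p i ^ 2)
      (((2 : ℕ) * q i ^ 1) • (ContinuousLinearMap.proj i : Pt →L[ℝ] ℝ)) q :=
    fun i => by
      have h := (hasDerivAt_pow 2 (q i)).comp_hasFDerivAt q (P i)
      exact h
  have hH := ((((myDiv (((Q 3).add (Q 4)).add (Q 5)) (hasFDerivAt_const (2:ℝ) q) two_ne_zero).add
      ((((Q 0).add (Q 1)).add ((Q 2).const_mul 4)).const_mul k1)).add
      (myDiv (hasFDerivAt_const k2 q) (Q 0) (pow_ne_zero 2 h0))).add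
      (myDiv (hasFDerivAt_const k3 q) (Q 1) (pow_ne_zero 2 h1))).add
      (myDiv (hasFDerivAt_const k4 q) (Q 2) (pow_ne_zero 2 h2))
  have hHf : fderiv ℝ (Ham k1 k2 k3 k4) q = _ := hH.fderiv
  have hK := ((((P 3).mul (((P 2).mul (P 3)).sub ((P 0).mul (P 5)))).neg.add
      (((Q 0).const_mul (2 * k1)).mul (P 2))).sub
      (myDiv ((P 2).const_mul (2 * k2)) (Q 0) (pow_ne_zero 2 h0)))
  have hKf : fderiv ℝ (KRL1 k1 k2) q = _ := hK.fderiv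
  have hW := myDiv ((P 0).mul (P 3)) (P 2) h2
  have hWf : fderiv ℝ (fun p : Pt => p 0 * p 3 / p 2) q = _ := hW.fderiv
  have ev : ∀ i j : Fin 6, (ContinuousLinearMap.proj i : Pt →L[ℝ] ℝ) (e j)
      = if i = j then 1 else 0 := by
    intro i j
    simp [e, Pi.single_apply]
  constructor
  · simp only [pb, hKf, hHf, ContinuousLinearMap.add_apply,
      ContinuousLinearMap.sub_apply, ContinuousLinearMap.neg_apply,
      ContinuousLinearMap.smul_apply, ContinuousLinearMap.zero_apply,
      smul_eq_mul, ev, Fin.reduceEq, reduceIte]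
    norm_num
    field_simp
    ring
  · simp only [pb, hWf, hHf, ContinuousLinearMap.add_apply,
      ContinuousLinearMap.sub_apply, ContinuousLinearMap.neg_apply,
      ContinuousLinearMap.smul_apply, ContinuousLinearMap.zero_apply,
      smul_eq_mul, ev, Fin.reduceEq, reduceIte, KRL1]
    norm_num
    field_simp
    ring
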